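/- Let S be a unital ring, σ injective, δ a left σ-derivation, and f ∈ S[t;σ,δ] monic of degree m ≥ 2 such that S_f is not associative. Then S is contained in both the left nucleus and the middle nucleus of S_f, and the right nucleus of S_f equals {g ∈ R : deg(g) < m and fg ∈ Rf}. -/

import Mathlib

/-- An abstract presentation of the skew polynomial ring `S[t;σ,δ]`:
a ring `R` together with an embedding of `S`, a variable `t` satisfying the
commutation rule `t·a = σ(a)·t + δ(a)`, such that the `t^i` form a basis of `R`
as a left `S`-module (encoded by the coefficient equivalence). -/
structure SkewPolyRing (S : Type*) (R : Type*) [Ring S] [Ring R]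
    (σ : S →+* S) (δ : S →+ S) : Type _ where
  ι : S →+* R
  t : R
  t_comm : ∀ a : S, t * ι a = ι (σ a) * t + ι (δ a)
  coeff : R ≃+ (ℕ →₀ S)
  coeff_symm : ∀ p : ℕ →₀ S, coeff.symm p = p.sum fun i a => ι a * t ^ i

namespace SkewPolyRing

variable {S R : Type*} [Ring S] [Ring R] {σ : S →+* S} {δ : S →+ S}

/-- `g` has degree `< m`. -/
def degLT (P : SkewPolyRing S R σ δ) (g : R) (m : ℕ) : Prop :=
  ∀ i, m ≤ i → P.coeff g i = 0

/-- The degree of a skew polynomial (with `deg 0 = 0` by convention). -/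
noncomputable def deg (P : SkewPolyRing S R σ δ) (g : R) : ℕ :=
  (P.coeff g).support.sup id

/-- `f` is monic of degree `m`. -/
def MonicDeg (P : SkewPolyRing S R σ δ) (f : R) (m : ℕ) : Prop :=
  P.coeff f m = 1 ∧ ∀ i, m < i → P.coeff f i = 0

/-- `modr` computes a remainder of right division by `f`. -/
def IsModr (P : SkewPolyRing S R σ δ) (f : R) (m : ℕ) (modr : R → R) : Prop :=
  ∀ g : R, P.degLT (modr g) m ∧ ∃ q : R, g = q * f + modr g

end SkewPolyRing

namespace SkewPolyRing

variable {S R : Type*} [Ring S] [Ring R] {σ : S →+* S} {δ : S →+ S}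
variable (P : SkewPolyRing S R σ δ)

lemma coeff_single (a : S) (i : ℕ) :
    P.coeff (P.ι a * P.t ^ i) = Finsupp.single i a := by
  have h : P.coeff.symm (Finsupp.single i a) = P.ι a * P.t ^ i := by
    rw [P.coeff_symm, Finsupp.sum_single_index (by simp)]
  rw [← h, AddEquiv.apply_symm_apply]

lemma eq_sum (g : R) : g = (P.coeff g).sum fun i a => P.ι a * P.t ^ i := by
  conv_lhs => rw [← P.coeff.symm_apply_apply g, P.coeff_symm]

lemma degLT_mono {g : R} {n k : ℕ} (h : P.degLT g n) (hnk : n ≤ k) : P.degLT g k :=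
  fun i hi => h i (hnk.trans hi)

lemma degLT_add {u v : R} {n : ℕ} (hu : P.degLT u n) (hv : P.degLT v n) :
    P.degLT (u + v) n := fun i hi => by
  rw [map_add, Finsupp.add_apply, hu i hi, hv i hi, add_zero]

lemma degLT_neg {u : R} {n : ℕ} (hu : P.degLT u n) : P.degLT (-u) n := fun i hi => by
  rw [map_neg, Finsupp.neg_apply, hu i hi, neg_zero]

lemma degLT_sub {u v : R} {n : ℕ} (hu : P.degLT u n) (hv : P.degLT v n) :
    P.degLT (u - v) n := fun i hi => by
  rw [map_sub, Finsupp.sub_apply, hu i hi, hv i hi, sub_zero]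

lemma degLT_sum {A : Type*} (s : Finset A) (F : A → R) (n : ℕ)
    (h : ∀ i ∈ s, P.degLT (F i) n) : P.degLT (∑ i ∈ s, F i) n := fun j hj => by
  rw [map_sum, Finset.sum_apply']
  exact Finset.sum_eq_zero fun i hi => h i hi j hj

lemma degLT_single {a : S} {i n : ℕ} (h : i < n) : P.degLT (P.ι a * P.t ^ i) n :=
  fun j hj => by
    rw [P.coeff_single, Finsupp.single_apply, if_neg (by omega)]

lemma degLT_ι (a : S) : P.degLT (P.ι a) 1 := by
  have h := P.degLT_single (a := a) (i := 0) (n := 1) one_pos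
  rwa [pow_zero, mul_one] at h

lemma t_mul_single (a : S) (i : ℕ) :
    P.t * (P.ι a * P.t ^ i) = P.ι (σ a) * P.t ^ (i + 1) + P.ι (δ a) * P.t ^ i := by
  rw [← mul_assoc, P.t_comm, add_mul, mul_assoc, ← pow_succ']

lemma degLT_t_mul {u : R} {n : ℕ} (hu : P.degLT u n) : P.degLT (P.t * u) (n + 1) := by
  rw [P.eq_sum u, Finsupp.sum, Finset.mul_sum]
  apply P.degLT_sum
  intro i hi
  have hin : i < n := by
    by_contra hc
    exact Finsupp.mem_support_iff.mp hi (hu i (not_lt.mp hc))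
  rw [P.t_mul_single]
  exact P.degLT_add (P.degLT_single (by omega)) (P.degLT_single (by omega))

lemma degLT_t_pow_mul {u : R} {n : ℕ} (k : ℕ) (hu : P.degLT u n) :
    P.degLT (P.t ^ k * u) (n + k) := by
  induction k with
  | zero => rw [pow_zero, one_mul]; exact hu
  | succ k ih =>
      have e : P.t ^ (k + 1) * u = P.t * (P.t ^ k * u) := by rw [pow_succ', mul_assoc]
      rw [e]
      exact P.degLT_t_mul ih

lemma degLT_ι_mul (a : S) {u : R} {n : ℕ} (hu : P.degLT u n) : P.degLT (P.ι a * u) n := by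
  rw [P.eq_sum u, Finsupp.sum, Finset.mul_sum]
  apply P.degLT_sum
  intro i hi
  have hin : i < n := by
    by_contra hc
    exact Finsupp.mem_support_iff.mp hi (hu i (not_lt.mp hc))
  rw [← mul_assoc, ← map_mul]
  exact P.degLT_single hin

lemma degLT_mul {u v : R} {n k : ℕ} (hu : P.degLT u n) (hv : P.degLT v (k + 1)) :
    P.degLT (u * v) (n + k) := by
  rw [P.eq_sum u, Finsupp.sum, Finset.sum_mul]
  apply P.degLT_sum
  intro i hi
  have hin : i < n := by
    by_contra hc
    exact Finsupp.mem_support_iff.mp hi (hu i (not_lt.mp hc))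
  rw [mul_assoc]
  exact P.degLT_mono (P.degLT_ι_mul _ (P.degLT_t_pow_mul i hv)) (by omega)

lemma coeff_t_pow (i : ℕ) : P.coeff (P.t ^ i) = Finsupp.single i 1 := by
  have h := P.coeff_single 1 i
  simpa using h

lemma degLT_of_monic {f : R} {m : ℕ} (hf : P.MonicDeg f m) : P.degLT f (m + 1) :=
  fun i hi => hf.2 i (by omega)

lemma degLT_sub_tpow {f : R} {m : ℕ} (hf : P.MonicDeg f m) :
    P.degLT (f - P.t ^ m) m := fun i hi => by
  rw [map_sub, Finsupp.sub_apply, P.coeff_t_pow, Finsupp.single_apply]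
  rcases eq_or_lt_of_le hi with h | h
  · rw [if_pos h, ← h, hf.1]
    exact sub_self _
  · rw [if_neg (by omega), hf.2 i h, sub_zero]

lemma degLT_trunc {u : R} {n : ℕ} (hu : P.degLT u (n + 1)) :
    P.degLT (u - P.ι (P.coeff u n) * P.t ^ n) n := fun i hi => by
  rw [map_sub, Finsupp.sub_apply, P.coeff_single, Finsupp.single_apply]
  rcases eq_or_lt_of_le hi with h | h
  · rw [if_pos h, ← h]
    exact sub_self _
  · rw [if_neg (by omega), hu i (by omega), sub_zero]

lemma coeff_mul_monic {f : R} {m : ℕ} (hf : P.MonicDeg f m) (hm : 1 ≤ m)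
    {u : R} {n : ℕ} (hu : P.degLT u (n + 1)) :
    P.coeff (u * f) (n + m) = P.coeff u n := by
  obtain ⟨m', rfl⟩ : ∃ m', m = m' + 1 := ⟨m - 1, by omega⟩
  set a := P.coeff u n with ha
  have key : u * f = (u - P.ι a * P.t ^ n) * f
      + (P.ι a * P.t ^ n) * (f - P.t ^ (m' + 1)) + P.ι a * P.t ^ (n + (m' + 1)) := by
    have hp : P.t ^ (n + (m' + 1)) = P.t ^ n * P.t ^ (m' + 1) := pow_add _ _ _
    rw [hp]
    noncomm_ring
  have c1 : P.coeff ((u - P.ι a * P.t ^ n) * f) (n + (m' + 1)) = 0 :=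
    P.degLT_mul (P.degLT_trunc hu) (P.degLT_of_monic hf) (n + (m' + 1)) (by omega)
  have c2 : P.coeff ((P.ι a * P.t ^ n) * (f - P.t ^ (m' + 1))) (n + (m' + 1)) = 0 :=
    P.degLT_mul (P.degLT_single (Nat.lt_succ_self n)) (P.degLT_sub_tpow hf)
      (n + (m' + 1)) (by omega)
  have c3 : P.coeff (P.ι a * P.t ^ (n + (m' + 1))) (n + (m' + 1)) = a := by
    rw [P.coeff_single, Finsupp.single_apply, if_pos rfl]
  rw [key, AddEquiv.map_add, AddEquiv.map_add, Finsupp.add_apply, Finsupp.add_apply,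
    c1, c2, c3, zero_add, zero_add]

lemma mul_monic_eq_zero {f : R} {m : ℕ} (hf : P.MonicDeg f m) (hm : 1 ≤ m)
    {q : R} (h : P.degLT (q * f) m) : q * f = 0 := by
  have hq : q = 0 := by
    by_contra hq0
    have hc : P.coeff q ≠ 0 := fun h0 => hq0 (by
      have h1 := congrArg P.coeff.symm h0
      rwa [AddEquiv.symm_apply_apply, map_zero] at h1)
    have hne : (P.coeff q).support.Nonempty := Finsupp.support_nonempty_iff.mpr hc
    set n := (P.coeff q).support.max' hne with hn
    have hmem : n ∈ (P.coeff q).support := (P.coeff q).support.max'_mem hne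
    have hqn : P.coeff q n ≠ 0 := Finsupp.mem_support_iff.mp hmem
    have hdq : P.degLT q (n + 1) := by
      intro i hi
      by_contra hci
      have hmem2 : i ∈ (P.coeff q).support := Finsupp.mem_support_iff.mpr hci
      have := (P.coeff q).support.le_max' i hmem2
      omega
    have h2 := P.coeff_mul_monic hf hm hdq
    rw [h (n + m) (by omega)] at h2
    exact hqn h2.symm
  rw [hq, zero_mul]

lemma modr_eq {f : R} {m : ℕ} (hf : P.MonicDeg f m) (hm : 1 ≤ m)
    {modr : R → R} (hmodr : P.IsModr f m modr) {g q r : R}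
    (hg : g = q * f + r) (hr : P.degLT r m) : modr g = r := by
  obtain ⟨hd, q', hq'⟩ := hmodr g
  have e : (q' - q) * f = r - modr g := by
    have e1 : q' * f + modr g = q * f + r := by rw [← hq', ← hg]
    rw [sub_mul, sub_eq_sub_iff_add_eq_add]
    exact e1.trans (add_comm _ _)
  have h0 := P.mul_monic_eq_zero hf hm (q := q' - q) (by rw [e]; exact P.degLT_sub hr hd)
  rw [e] at h0
  exact (sub_eq_zero.mp h0).symm

lemma modr_degLT {f : R} {m : ℕ} (hf : P.MonicDeg f m) (hm : 1 ≤ m)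
    {modr : R → R} (hmodr : P.IsModr f m modr) {r : R}
    (hr : P.degLT r m) : modr r = r :=
  P.modr_eq hf hm hmodr (q := 0) (by rw [zero_mul, zero_add]) hr

lemma modr_qf_add {f : R} {m : ℕ} (hf : P.MonicDeg f m) (hm : 1 ≤ m)
    {modr : R → R} (hmodr : P.IsModr f m modr) (q w : R) :
    modr (q * f + w) = modr w := by
  obtain ⟨hd, q'', e⟩ := hmodr w
  refine P.modr_eq hf hm hmodr (q := q + q'') ?_ hd
  conv_lhs => rw [e]
  rw [add_mul, add_assoc]

lemma modr_add {f : R} {m : ℕ} (hf : P.MonicDeg f m) (hm : 1 ≤ m)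
    {modr : R → R} (hmodr : P.IsModr f m modr) (u v : R) :
    modr (u + v) = modr u + modr v := by
  obtain ⟨hdu, qu, eu⟩ := hmodr u
  obtain ⟨hdv, qv, ev⟩ := hmodr v
  refine P.modr_eq hf hm hmodr (q := qu + qv) ?_ (P.degLT_add hdu hdv)
  conv_lhs => rw [eu, ev]
  rw [add_mul]
  abel

end SkewPolyRing

/-- If the Petit algebra `S_f` (for `f ∈ R = S[t;σ,δ]` monic of degree `m ≥ 2`) is not
associative, then `S` is contained in the left and middle nuclei of `S_f`, and the right
nucleus of `S_f` equals `{g ∈ R : deg g < m and f·g ∈ R·f}`. -/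
theorem petit_nuclei {S R : Type*} [Ring S] [Ring R]
    (σ : S →+* S) (δ : S →+ S) (hσ : Function.Injective σ)
    (hδ : ∀ a b : S, δ (a * b) = σ a * δ b + δ a * b)
    (P : SkewPolyRing S R σ δ) (f : R) (m : ℕ) (hm : 2 ≤ m)
    (hf : P.MonicDeg f m) (modr : R → R) (hmodr : P.IsModr f m modr)
    -- `S_f` is not associative:
    (hna : ¬ ∀ g h k : R, P.degLT g m → P.degLT h m → P.degLT k m →
        modr (modr (g * h) * k) = modr (g * modr (h * k))) :
    -- `S ⊆ Nuc_l(S_f)`: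
    (∀ (a : S) (h k : R), P.degLT h m → P.degLT k m →
        modr (modr (P.ι a * h) * k) = modr (P.ι a * modr (h * k))) ∧
    -- `S ⊆ Nuc_m(S_f)`:
    (∀ (a : S) (g k : R), P.degLT g m → P.degLT k m →
        modr (modr (g * P.ι a) * k) = modr (g * modr (P.ι a * k))) ∧
    -- `Nuc_r(S_f) = {g : deg g < m ∧ f·g ∈ R·f}`:
    (∀ g : R, P.degLT g m →
      ((∀ x y : R, P.degLT x m → P.degLT y m →
          modr (modr (x * y) * g) = modr (x * modr (y * g))) ↔
        ∃ q : R, f * g = q * f)) := by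
  have hm1 : 1 ≤ m := by omega
  refine ⟨?_, ?_, ?_⟩
  · -- left nucleus
    intro a h k hh hk
    have hah : P.degLT (P.ι a * h) m := P.degLT_ι_mul a hh
    obtain ⟨hr, q, hq⟩ := hmodr (h * k)
    rw [P.modr_degLT hf hm1 hmodr hah]
    have e1 : P.ι a * h * k = (P.ι a * q) * f + P.ι a * modr (h * k) := by
      rw [mul_assoc]
      conv_lhs => rw [hq]
      rw [mul_add, mul_assoc]
    rw [e1, P.modr_qf_add hf hm1 hmodr]
  · -- middle nucleus
    intro a g k hgm hk
    have h1 : P.degLT (g * P.ι a) m := P.degLT_mul hgm (P.degLT_ι a)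
    have h2 : P.degLT (P.ι a * k) m := P.degLT_ι_mul a hk
    rw [P.modr_degLT hf hm1 hmodr h1, P.modr_degLT hf hm1 hmodr h2, mul_assoc]
  · -- right nucleus
    intro g hg
    constructor
    · intro hass
      have htm1 : P.degLT (P.t ^ (m - 1)) m := by
        intro i hi
        rw [P.coeff_t_pow, Finsupp.single_apply, if_neg (by omega)]
      have ht : P.degLT P.t m := by
        intro i hi
        have e : P.t = P.t ^ 1 := (pow_one _).symm
        rw [e, P.coeff_t_pow, Finsupp.single_apply, if_neg (by omega)]
      have key := hass (P.t ^ (m - 1)) P.t htm1 ht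
      have htm : P.t ^ (m - 1) * P.t = P.t ^ m := by
        rw [← pow_succ]
        congr 1
        omega
      have hr0 : P.degLT (f - P.t ^ m) m := P.degLT_sub_tpow hf
      have hmodrtm : modr (P.t ^ m) = -(f - P.t ^ m) :=
        P.modr_eq hf hm1 hmodr (q := 1) (by rw [one_mul]; abel) (P.degLT_neg hr0)
      rw [htm, hmodrtm] at key
      obtain ⟨hr3, q3, e3⟩ := hmodr (P.t * g)
      have eA : P.t ^ (m - 1) * (P.t * g)
          = (P.t ^ (m - 1) * q3) * f + P.t ^ (m - 1) * modr (P.t * g) := by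
        conv_lhs => rw [e3]
        rw [mul_add, mul_assoc]
      have eB : P.t ^ (m - 1) * (P.t * g) = f * g + -(f - P.t ^ m) * g := by
        rw [← mul_assoc, htm]
        noncomm_ring
      have h1 : modr (P.t ^ (m - 1) * modr (P.t * g))
          = modr (f * g) + modr (-(f - P.t ^ m) * g) := by
        rw [← P.modr_qf_add hf hm1 hmodr (P.t ^ (m - 1) * q3)
              (P.t ^ (m - 1) * modr (P.t * g)),
          ← eA, eB, P.modr_add hf hm1 hmodr (f * g) (-(f - P.t ^ m) * g)]
      rw [h1] at key
      have h0 : modr (f * g) = 0 := right_eq_add.mp key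
      obtain ⟨_, q, hq⟩ := hmodr (f * g)
      exact ⟨q, by rw [hq, h0, add_zero]⟩
    · rintro ⟨q0, hq0⟩ x y hx hy
      obtain ⟨hr1, q1, e1⟩ := hmodr (y * g)
      obtain ⟨hr2, q2, e2⟩ := hmodr (x * y)
      have eL : x * y * g = (q2 * q0) * f + modr (x * y) * g := by
        conv_lhs => rw [e2]
        rw [add_mul, mul_assoc q2 f g, hq0, ← mul_assoc]
      have eR : x * y * g = (x * q1) * f + x * modr (y * g) := by
        rw [mul_assoc]
        conv_lhs => rw [e1]
        rw [mul_add, mul_assoc]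
      calc modr (modr (x * y) * g)
          = modr (x * y * g) := by rw [eL, P.modr_qf_add hf hm1 hmodr]
        _ = modr (x * modr (y * g)) := by rw [eR, P.modr_qf_add hf hm1 hmodr]
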